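/- arXiv:1908.06000 — 3 statements merged into one kernel-verified Lean document; each statement's English description precedes it below -/
import Mathlib

section
/- Let n ≥ 1 be an integer, let d > 0, and let E ⊆ ℝⁿ be a bounded Lebesgue-measurable set with diam(E) ≤ d. For t ∈ ℝ let E_t = E ∩ ⋂_{i=1}^{n} (E + t·e_i), where e_1, …, e_n are the standard basis vectors of ℝⁿ. Then ∫_ℝ vol(E_t) dt ≤ 2·(d^{n−1} · vol(E)^{2n})^{1/(2n−1)}. -/
open MeasureTheory

noncomputable section

open MeasureTheory Function Set ENNReal

noncomputable section

namespace Statement9Aux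

variable {n : ℕ}

def bv (n : ℕ) (i : Fin n) : Fin n → ℝ := Pi.single i 1

/-- slice measure of `A` through `x` in direction `i`. -/
def slc (A : Set (Fin n → ℝ)) (i : Fin n) (x : Fin n → ℝ) : ℝ≥0∞ :=
  volume {s : ℝ | Function.update x i s ∈ A}

lemma sub_single_eq_update (x : Fin n → ℝ) (i : Fin n) (t : ℝ) :
    x - t • bv n i = Function.update x i (x i - t) := by
  funext j
  rcases eq_or_ne j i with rfl | h
  · simp [bv]
  · simp [bv, h, Pi.single_apply, Function.update_apply]

lemma volume_slice (A : Set (Fin n → ℝ)) (hA : MeasurableSet A) (x : Fin n → ℝ) (i : Fin n) :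
    volume {t : ℝ | x - t • bv n i ∈ A} = slc A i x := by
  have h1 : {t : ℝ | x - t • bv n i ∈ A}
      = (fun t => x i - t) ⁻¹' {s : ℝ | Function.update x i s ∈ A} := by
    ext t
    simp [sub_single_eq_update]
  rw [h1]
  exact (Measure.measurePreserving_sub_left volume (x i)).measure_preimage
    ((measurable_update x hA).nullMeasurableSet)

lemma slc_lintegral (A : Set (Fin n → ℝ)) (hA : MeasurableSet A) (x : Fin n → ℝ) (i : Fin n) :
    slc A i x = ∫⁻ s : ℝ, A.indicator 1 (Function.update x i s) := by
  have h : ∀ s : ℝ, A.indicator 1 (Function.update x i s)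
      = ((Function.update x i) ⁻¹' A).indicator (fun _ => (1:ℝ≥0∞)) s := by
    intro s
    rfl
  simp_rw [h]
  rw [lintegral_indicator_const (measurable_update x hA), one_mul]
  rfl




lemma swap_eq (A : Set (Fin n → ℝ)) (hA : MeasurableSet A) :
    ∫⁻ t : ℝ, volume {x : Fin n → ℝ | x ∈ A ∧ ∀ i, x - t • bv n i ∈ A}
      = ∫⁻ x : Fin n → ℝ, volume {t : ℝ | x ∈ A ∧ ∀ i, x - t • bv n i ∈ A} := by
  set M : Set (ℝ × (Fin n → ℝ)) := {p | p.2 ∈ A ∧ ∀ i, p.2 - p.1 • bv n i ∈ A} with hM_def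
  have hM : MeasurableSet M := by
    have h1 : MeasurableSet {p : ℝ × (Fin n → ℝ) | p.2 ∈ A} := measurable_snd hA
    have h2 : ∀ i : Fin n, MeasurableSet {p : ℝ × (Fin n → ℝ) | p.2 - p.1 • bv n i ∈ A} :=
      fun i => (measurable_snd.sub (measurable_fst.smul_const _)) hA
    have h3 : M = {p : ℝ × (Fin n → ℝ) | p.2 ∈ A}
        ∩ ⋂ i : Fin n, {p : ℝ × (Fin n → ℝ) | p.2 - p.1 • bv n i ∈ A} := by
      ext p; simp [hM_def]
    rw [h3]
    exact h1.inter (MeasurableSet.iInter h2)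
  have hs1 : ∀ t : ℝ, volume {x : Fin n → ℝ | x ∈ A ∧ ∀ i, x - t • bv n i ∈ A}
      = ∫⁻ x : Fin n → ℝ, M.indicator 1 (t, x) := by
    intro t
    have h4 : {x : Fin n → ℝ | x ∈ A ∧ ∀ i, x - t • bv n i ∈ A} = (Prod.mk t) ⁻¹' M := rfl
    rw [h4, ← lintegral_indicator_one (measurable_prodMk_left hM)]
    rfl
  have hs2 : ∀ x : Fin n → ℝ, volume {t : ℝ | x ∈ A ∧ ∀ i, x - t • bv n i ∈ A}
      = ∫⁻ t : ℝ, M.indicator 1 (t, x) := by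
    intro x
    have h4 : {t : ℝ | x ∈ A ∧ ∀ i, x - t • bv n i ∈ A} = (fun t : ℝ => (t, x)) ⁻¹' M := rfl
    rw [h4, ← lintegral_indicator_one (measurable_prodMk_right hM)]
    rfl
  simp_rw [hs1, hs2]
  exact lintegral_lintegral_swap (measurable_one.indicator hM).aemeasurable

lemma combine {D v : ℝ≥0∞} (hD0 : D ≠ 0) (hDt : D ≠ ⊤) (hv0 : v ≠ 0) (hvt : v ≠ ⊤)
    {N : ℝ} (hN : 2 ≤ N) :
    D ^ ((N-1)/(2*N-1)) * v ^ (1/(2*N-1)) * v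
      + (D * (D ^ ((N-1)/(2*N-1)) * v ^ (1/(2*N-1))) ^ (-(N * (1/(N-1))))) * v ^ (N * (1/(N-1)))
      = 2 * (D ^ ((N-1)/(2*N-1)) * v ^ (2*N/(2*N-1))) := by
  have h1 : (0:ℝ) < N - 1 := by linarith
  have h2 : (0:ℝ) < 2*N - 1 := by linarith
  have hDp : 0 < D := pos_iff_ne_zero.mpr hD0
  have hvp : 0 < v := pos_iff_ne_zero.mpr hv0
  have hDa0 : D ^ ((N-1)/(2*N-1)) ≠ 0 := (ENNReal.rpow_pos hDp hDt).ne'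
  have hva0 : v ^ (1/(2*N-1)) ≠ 0 := (ENNReal.rpow_pos hvp hvt).ne'
  have e1 : D ^ ((N-1)/(2*N-1)) * v ^ (1/(2*N-1)) * v
      = D ^ ((N-1)/(2*N-1)) * v ^ (1/(2*N-1) + 1) := by
    rw [mul_assoc]
    congr 1
    rw [ENNReal.rpow_add _ _ hv0 hvt, ENNReal.rpow_one]
  have e2 : (D * (D ^ ((N-1)/(2*N-1)) * v ^ (1/(2*N-1))) ^ (-(N * (1/(N-1))))) * v ^ (N * (1/(N-1)))
      = D ^ (1 + ((N-1)/(2*N-1)) * (-(N * (1/(N-1)))))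
        * v ^ ((1/(2*N-1)) * (-(N * (1/(N-1)))) + N * (1/(N-1))) := by
    rw [ENNReal.mul_rpow_of_ne_zero hDa0 hva0, ← ENNReal.rpow_mul, ← ENNReal.rpow_mul,
      ENNReal.rpow_add _ _ hD0 hDt, ENNReal.rpow_one,
      ENNReal.rpow_add _ _ hv0 hvt]
    ring
  have h1' : N - 1 ≠ 0 := h1.ne'
  have h2' : 2*N - 1 ≠ 0 := h2.ne'
  have x1 : 1/(2*N-1) + 1 = 2*N/(2*N-1) := by field_simp; ring
  have x2 : 1 + ((N-1)/(2*N-1)) * (-(N * (1/(N-1)))) = (N-1)/(2*N-1) := by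
    field_simp
    have hu : (-1 + N * 2)⁻¹ * (-1 + N * 2) = 1 := inv_mul_cancel₀ (by intro h; linarith)
    linear_combination (-1) * hu
  have x3 : (1/(2*N-1)) * (-(N * (1/(N-1)))) + N * (1/(N-1)) = 2*N/(2*N-1) := by
    field_simp
    ring
  rw [e1, e2, x1, x2, x3]
  exact (two_mul _).symm

end Statement9Aux

namespace Statement9Aux

lemma Tx_le_d {A : Set (Fin n → ℝ)} (hn : 1 ≤ n) {d : ℝ}
    (hdm : ∀ x ∈ A, ∀ y ∈ A, ∀ i, |x i - y i| ≤ d) (x : Fin n → ℝ) :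
    volume {t : ℝ | x ∈ A ∧ ∀ i, x - t • bv n i ∈ A} ≤ ENNReal.ofReal d := by
  refine le_trans (Real.volume_le_diam _) (EMetric.diam_le ?_)
  rintro t ⟨-, ht⟩ t' ⟨-, ht'⟩
  rw [edist_dist, Real.dist_eq]
  apply ENNReal.ofReal_le_ofReal
  set i0 : Fin n := ⟨0, hn⟩
  have h1 := hdm _ (ht i0) _ (ht' i0) i0
  have e1 : ∀ s : ℝ, (x - s • bv n i0) i0 = x i0 - s := by
    intro s; simp [bv]
  rw [e1, e1] at h1
  have h2 : (x i0 - t) - (x i0 - t') = t' - t := by ring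
  rw [h2] at h1
  rwa [abs_sub_comm]

theorem key (hn : 1 ≤ n) (d : ℝ) (hd : 0 < d)
    (A : Set (Fin n → ℝ)) (hA : MeasurableSet A) (hfin : volume A ≠ ⊤)
    (hdm : ∀ x ∈ A, ∀ y ∈ A, ∀ i, |x i - y i| ≤ d) :
    ∫⁻ t : ℝ, volume {x : Fin n → ℝ | x ∈ A ∧ ∀ i, x - t • bv n i ∈ A} ≤
      2 * (ENNReal.ofReal d ^ (((n:ℝ) - 1)/(2*(n:ℝ) - 1)) *
        (volume A) ^ ((2*(n:ℝ))/(2*(n:ℝ) - 1))) := by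
  by_cases hv0 : volume A = 0
  · have hz : ∀ t : ℝ, volume {x : Fin n → ℝ | x ∈ A ∧ ∀ i, x - t • bv n i ∈ A} = 0 :=
      fun t => measure_mono_null (fun x hx => hx.1) hv0
    simp only [hz, lintegral_zero]
    exact zero_le
  rw [swap_eq A hA]
  rcases lt_or_eq_of_le hn with h1n | h1n
  · -- n >= 2
    set N : ℝ := (n : ℝ) with hN_def
    have hN2 : (2:ℝ) ≤ N := by
      have : (2:ℕ) ≤ n := h1n
      rw [hN_def]; exact_mod_cast this
    have hr1 : (0:ℝ) < N - 1 := by linarith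
    have hr2 : (0:ℝ) < 2*N - 1 := by linarith
    set D : ℝ≥0∞ := ENNReal.ofReal d with hD_def
    have hD0 : D ≠ 0 := (ENNReal.ofReal_pos.mpr hd).ne'
    have hDt : D ≠ ⊤ := ENNReal.ofReal_ne_top
    set v : ℝ≥0∞ := volume A with hv_def
    set lam : ℝ≥0∞ := D ^ ((N-1)/(2*N-1)) * v ^ (1/(2*N-1)) with hlam_def
    have hvp : 0 < v := pos_iff_ne_zero.mpr hv0
    have hlam0 : lam ≠ 0 :=
      mul_ne_zero (ENNReal.rpow_pos (ENNReal.ofReal_pos.mpr hd) hDt).ne'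
        (ENNReal.rpow_pos hvp hfin).ne'
    have hlamt : lam ≠ ⊤ :=
      ENNReal.mul_ne_top (ENNReal.rpow_ne_top_of_nonneg (by positivity) hDt)
        (ENNReal.rpow_ne_top_of_nonneg (by positivity) hfin)
    have hp0 : (0:ℝ) ≤ 1/(N-1) := by positivity
    have hCt : D * lam ^ (-(N * (1/(N-1)))) ≠ ⊤ :=
      ENNReal.mul_ne_top hDt (by
        rw [ENNReal.rpow_neg]
        exact ENNReal.inv_ne_top.mpr (ENNReal.rpow_pos (pos_iff_ne_zero.mpr hlam0) hlamt).ne')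
    have hLW : ∫⁻ x : Fin n → ℝ, ∏ i, slc A i x ^ (1/(N-1)) ≤ v ^ (N * (1/(N-1))) := by
      have hconj : ((Fintype.card (Fin n) : ℝ)).HolderConjugate (N * (1/(N-1))) := by
        rw [Fintype.card_fin, ← hN_def, mul_one_div]
        exact Real.HolderConjugate.conjExponent (by linarith)
      have h0 := lintegral_prod_lintegral_pow_le (fun _ : Fin n => (volume : Measure ℝ))
        hconj (f := A.indicator 1) (measurable_one.indicator hA)
      rw [← volume_pi] at h0
      simp only [Fintype.card_fin] at h0
      rw [← hN_def] at h0
      rw [lintegral_indicator_one hA] at h0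
      have hgoal : (∫⁻ x : Fin n → ℝ, ∏ i, slc A i x ^ (1/(N-1)))
          = ∫⁻ x : Fin n → ℝ, ∏ i, (∫⁻ s : ℝ, A.indicator 1 (Function.update x i s)) ^ (1/(N-1)) :=
        lintegral_congr fun x => Finset.prod_congr rfl fun i _ => by rw [slc_lintegral A hA]
      rw [hgoal]
      exact h0
    have hbnd : ∀ x : Fin n → ℝ, volume {t : ℝ | x ∈ A ∧ ∀ i, x - t • bv n i ∈ A}
        ≤ A.indicator (fun _ => lam) x
          + (D * lam ^ (-(N * (1/(N-1))))) * A.indicator (fun y => ∏ i, slc A i y ^ (1/(N-1))) x := by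
      intro x
      by_cases hx : x ∈ A
      · by_cases hlow : ∃ i, slc A i x ≤ lam
        · obtain ⟨i, hi⟩ := hlow
          calc volume {t : ℝ | x ∈ A ∧ ∀ i, x - t • bv n i ∈ A}
              ≤ volume {t : ℝ | x - t • bv n i ∈ A} :=
                measure_mono (fun t ht => ht.2 i)
            _ = slc A i x := volume_slice A hA x i
            _ ≤ lam := hi
            _ = A.indicator (fun _ => lam) x := (Set.indicator_of_mem hx fun _ => lam).symm
            _ ≤ _ := le_self_add
        · push_neg at hlow
          have hprod : lam ^ (N * (1/(N-1))) ≤ ∏ i, slc A i x ^ (1/(N-1)) := by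
            have hc : lam ^ (N * (1/(N-1))) = ∏ _i : Fin n, lam ^ (1/(N-1)) := by
              rw [Finset.prod_const, Finset.card_univ, Fintype.card_fin,
                ← ENNReal.rpow_natCast (lam ^ (1/(N-1))) n, ← ENNReal.rpow_mul]
              congr 1
              rw [← hN_def]
              ring
            rw [hc]
            exact Finset.prod_le_prod' fun i _ => ENNReal.rpow_le_rpow (hlow i).le hp0
          have hone : lam ^ (-(N * (1/(N-1)))) * lam ^ (N * (1/(N-1))) = 1 := by
            rw [← ENNReal.rpow_add _ _ hlam0 hlamt, neg_add_cancel, ENNReal.rpow_zero]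
          calc volume {t : ℝ | x ∈ A ∧ ∀ i, x - t • bv n i ∈ A}
              ≤ D := Tx_le_d hn hdm x
            _ = D * lam ^ (-(N * (1/(N-1)))) * lam ^ (N * (1/(N-1))) := by
                rw [mul_assoc, hone, mul_one]
            _ ≤ D * lam ^ (-(N * (1/(N-1)))) * ∏ i, slc A i x ^ (1/(N-1)) :=
                mul_le_mul_right hprod _
            _ = (D * lam ^ (-(N * (1/(N-1)))))
                  * A.indicator (fun y => ∏ i, slc A i y ^ (1/(N-1))) x := by
                rw [Set.indicator_of_mem hx]
            _ ≤ _ := le_add_self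
      · have hz : {t : ℝ | x ∈ A ∧ ∀ i, x - t • bv n i ∈ A} = ∅ := by
          ext t; simp [hx]
        rw [hz]
        simp
    calc ∫⁻ x : Fin n → ℝ, volume {t : ℝ | x ∈ A ∧ ∀ i, x - t • bv n i ∈ A}
        ≤ ∫⁻ x : Fin n → ℝ, (A.indicator (fun _ => lam) x
          + (D * lam ^ (-(N * (1/(N-1))))) * A.indicator (fun y => ∏ i, slc A i y ^ (1/(N-1))) x) :=
          lintegral_mono hbnd
      _ = lam * v + (D * lam ^ (-(N * (1/(N-1)))))
            * ∫⁻ x : Fin n → ℝ, A.indicator (fun y => ∏ i, slc A i y ^ (1/(N-1))) x := by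
          rw [lintegral_add_left (measurable_const.indicator hA),
            lintegral_indicator_const hA, lintegral_const_mul' _ _ hCt]
      _ ≤ lam * v + (D * lam ^ (-(N * (1/(N-1))))) * v ^ (N * (1/(N-1))) := by
          gcongr
          exact le_trans (lintegral_mono fun x => Set.indicator_le_self _ _ x) hLW
      _ = 2 * (D ^ ((N-1)/(2*N-1)) * v ^ (2*N/(2*N-1))) := combine hD0 hDt hv0 hfin hN2
  · -- n = 1
    subst h1n
    have hone : ∀ x : Fin 1 → ℝ, volume {t : ℝ | x ∈ A ∧ ∀ i, x - t • bv 1 i ∈ A}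
        ≤ A.indicator (fun _ => volume A) x := by
      intro x
      by_cases hx : x ∈ A
      · rw [Set.indicator_of_mem hx]
        refine le_trans (measure_mono (show {t : ℝ | x ∈ A ∧ ∀ i, x - t • bv 1 i ∈ A} ⊆ {t : ℝ | x - t • bv 1 0 ∈ A} from fun t ht => ht.2 0)) ?_
        rw [volume_slice A hA x 0]
        have hup : ∀ s : ℝ, Function.update x 0 s = fun _ : Fin 1 => s := by
          intro s; funext j; rw [Subsingleton.elim j 0]; simp
        unfold slc
        simp_rw [hup]
        exact le_of_eq ((MeasurePreserving.symm (MeasurableEquiv.funUnique (Fin 1) ℝ)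
          (volume_preserving_funUnique (Fin 1) ℝ)).measure_preimage hA.nullMeasurableSet)
      · have hz : {t : ℝ | x ∈ A ∧ ∀ i, x - t • bv 1 i ∈ A} = ∅ := by
          ext t; simp [hx]
        rw [hz]
        simp
    have h2 : ∫⁻ x : Fin 1 → ℝ, volume {t : ℝ | x ∈ A ∧ ∀ i, x - t • bv 1 i ∈ A}
        ≤ volume A * volume A :=
      le_trans (lintegral_mono hone) (le_of_eq (lintegral_indicator_const hA _))
    refine le_trans h2 ?_
    have hexp0 : (((1:ℕ):ℝ) - 1)/(2*((1:ℕ):ℝ) - 1) = 0 := by norm_num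
    have hexp2 : (2*((1:ℕ):ℝ))/(2*((1:ℕ):ℝ) - 1) = ((2:ℕ):ℝ) := by norm_num
    rw [hexp0, hexp2, ENNReal.rpow_zero, one_mul, ENNReal.rpow_natCast, sq]
    calc volume A * volume A = 1 * (volume A * volume A) := (one_mul _).symm
      _ ≤ 2 * (volume A * volume A) := mul_le_mul_left one_le_two _


end Statement9Aux


open Statement9Aux in
/-- integral bound for self-intersections of multi-translates. -/
theorem statement9 (n : ℕ) (hn : 1 ≤ n) (d : ℝ) (hd : 0 < d)
    (E : Set (EuclideanSpace ℝ (Fin n))) (hE : MeasurableSet E)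
    (hbd : Bornology.IsBounded E) (hdiam : Metric.diam E ≤ d) :
    (∫⁻ t : ℝ,
        volume (E ∩ ⋂ i : Fin n,
          (fun x => x + t • EuclideanSpace.single i (1 : ℝ)) '' E)) ≤
      ENNReal.ofReal
        (2 * (d ^ (n - 1) * (volume E).toReal ^ (2 * n)) ^ ((1 : ℝ) / (2 * (n : ℝ) - 1))) := by
  classical
  have hfinE : volume E ≠ ⊤ := hbd.measure_lt_top.ne
  have hdm : ∀ x ∈ E, ∀ y ∈ E, ∀ i : Fin n, |x i - y i| ≤ d := by
    intro x hx y hy i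
    have h2 : dist (x i) (y i) ^ 2 ≤ ∑ j : Fin n, dist (x j) (y j) ^ 2 :=
      Finset.single_le_sum (f := fun j => dist (x j) (y j) ^ 2)
        (fun j _ => sq_nonneg _) (Finset.mem_univ i)
    have h1 : dist (x i) (y i) ≤ dist x y := by
      rw [EuclideanSpace.dist_eq]
      calc dist (x i) (y i) = Real.sqrt (dist (x i) (y i) ^ 2) := (Real.sqrt_sq dist_nonneg).symm
        _ ≤ _ := Real.sqrt_le_sqrt h2
    rw [← Real.dist_eq]
    exact h1.trans ((Metric.dist_le_diam_of_mem hbd hx hy).trans hdiam)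
  have hset : ∀ t : ℝ, E ∩ ⋂ i : Fin n, (fun x => x + t • EuclideanSpace.single i (1 : ℝ)) '' E
      = {x : EuclideanSpace ℝ (Fin n) | x ∈ E ∧
          ∀ i : Fin n, x - t • EuclideanSpace.single i (1:ℝ) ∈ E} := by
    intro t
    ext x
    simp only [Set.mem_inter_iff, Set.mem_iInter, Set.mem_image, Set.mem_setOf_eq]
    refine and_congr_right fun _ => forall_congr' fun i => ⟨?_, ?_⟩
    · rintro ⟨y, hy, rfl⟩
      simpa using hy
    · intro h
      exact ⟨x - t • EuclideanSpace.single i (1:ℝ), h, by abel⟩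
  simp_rw [hset]
  set e : EuclideanSpace ℝ (Fin n) ≃ᵐ (Fin n → ℝ) := (MeasurableEquiv.toLp 2 (Fin n → ℝ)).symm with he_def
  set A : Set (Fin n → ℝ) := ⇑e.symm ⁻¹' E with hA_def
  have hA : MeasurableSet A := e.symm.measurable hE
  have hmp : MeasurePreserving (⇑e.symm) (volume : Measure (Fin n → ℝ)) volume :=
    MeasurePreserving.symm e (EuclideanSpace.volume_preserving_symm_measurableEquiv_toLp (Fin n))
  have hAveq : volume A = volume E := hmp.measure_preimage hE.nullMeasurableSet
  have hvolset : ∀ t : ℝ, volume {x : EuclideanSpace ℝ (Fin n) | x ∈ E ∧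
        ∀ i : Fin n, x - t • EuclideanSpace.single i (1:ℝ) ∈ E}
      = volume {x : Fin n → ℝ | x ∈ A ∧ ∀ i, x - t • bv n i ∈ A} := by
    intro t
    have hm : MeasurableSet {x : EuclideanSpace ℝ (Fin n) | x ∈ E ∧
        ∀ i : Fin n, x - t • EuclideanSpace.single i (1:ℝ) ∈ E} := by
      have hrw : {x : EuclideanSpace ℝ (Fin n) | x ∈ E ∧
          ∀ i : Fin n, x - t • EuclideanSpace.single i (1:ℝ) ∈ E}
          = E ∩ ⋂ i : Fin n, (fun x => x - t • EuclideanSpace.single i (1:ℝ)) ⁻¹' E := by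
        ext x; simp
      rw [hrw]
      exact hE.inter (MeasurableSet.iInter fun i =>
        ((measurable_id.sub_const _) hE))
    have h0 := hmp.measure_preimage hm.nullMeasurableSet
    rw [← h0]
    congr 1
  refine le_trans (le_of_eq (lintegral_congr fun t => hvolset t))
    (le_trans (key hn d hd A hA (by rw [hAveq]; exact hfinE)
      (fun x hx y hy i => hdm _ hx _ hy i)) ?_)
  rw [hAveq]
  by_cases hv : volume E = 0
  · have hbpos : (0:ℝ) < 2*(n:ℝ)/(2*(n:ℝ)-1) := by
      have hN1 : (1:ℝ) ≤ (n:ℝ) := by exact_mod_cast hn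
      apply div_pos <;> linarith
    rw [hv, ENNReal.zero_rpow_of_pos hbpos, mul_zero, mul_zero]
    exact zero_le
  · have hvr : 0 < (volume E).toReal := ENNReal.toReal_pos hv hfinE
    have hN1 : (1:ℝ) ≤ (n:ℝ) := by exact_mod_cast hn
    have hcast : ((n - 1 : ℕ) : ℝ) = (n:ℝ) - 1 := by
      rw [Nat.cast_sub hn]; norm_num
    have hr1 : (d ^ (n-1) * (volume E).toReal ^ (2*n)) ^ ((1:ℝ)/(2*(n:ℝ)-1))
        = d ^ (((n:ℝ)-1)/(2*(n:ℝ)-1)) * (volume E).toReal ^ ((2*(n:ℝ))/(2*(n:ℝ)-1)) := by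
      rw [Real.mul_rpow (by positivity) (by positivity),
        ← Real.rpow_natCast d (n-1), ← Real.rpow_natCast (volume E).toReal (2*n),
        ← Real.rpow_mul hd.le, ← Real.rpow_mul hvr.le, hcast]
      push_cast
      rw [mul_one_div, mul_one_div]
    rw [hr1, ENNReal.ofReal_mul (by norm_num), ENNReal.ofReal_mul (by positivity),
      ← ENNReal.ofReal_rpow_of_pos hd, ← ENNReal.ofReal_rpow_of_pos hvr,
      ENNReal.ofReal_toReal hfinE, ENNReal.ofReal_ofNat]
end
end
end

section
/- Let n ≥ 2 be an integer and let c ∈ (0,1). There exists c′ > 0, depending only on n and c, with the following property: for every Lebesgue-measurable set E ⊆ ℝⁿ with 0 < λ(E) < ∞, if there exists a convex set F ⊆ ℝⁿ with c·λ(F) ≤ λ(E) ≤ c^{−1}·λ(E ∩ F), then J_n(E) ≥ c′·λ(E)². -/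
open MeasureTheory
open scoped ENNReal

noncomputable section

/-- `Jn n E` is the `(n+1)`-st power of the `L^{n+1}` norm of the X-ray transform of the
indicator of `E`: the integral over directions `ξ` in the unit sphere (with the standard
unnormalized surface measure `volume.toSphere`) and points `x ∈ E` of the `n`-th power of
the length of the chord of `E` through `x` in direction `ξ`. -/
def Jn (n : ℕ) (E : Set (EuclideanSpace ℝ (Fin n))) : ℝ≥0∞ :=
  ∫⁻ ξ : Metric.sphere (0 : EuclideanSpace ℝ (Fin n)) 1,
    (∫⁻ x in E, (volume {t : ℝ | x + t • (ξ : EuclideanSpace ℝ (Fin n)) ∈ E}) ^ n)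
    ∂((volume : Measure (EuclideanSpace ℝ (Fin n))).toSphere)


open Set Metric intervalIntegral

variable {n : ℕ}

local notation "V" => EuclideanSpace ℝ (Fin n)

lemma lint_pow_Ioc (k : ℕ) {t : ℝ} (ht : 0 ≤ t) :
    ∫⁻ s in Set.Ioc 0 t, ENNReal.ofReal (s ^ k) = ENNReal.ofReal (t ^ (k+1) / (k+1)) := by
  rw [← ofReal_integral_eq_lintegral_ofReal (intervalIntegrable_pow k).1 ?_,
    ← intervalIntegral.integral_of_le ht]
  · simp [integral_pow]
  · filter_upwards [ae_restrict_mem measurableSet_Ioc] with y hy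
    exact pow_nonneg hy.1.le _

lemma polar_lintegral (hn : 0 < n) (g : V → ℝ≥0∞) (hg : Measurable g) :
    ∫⁻ y, g y = ∫⁻ ξ : Metric.sphere (0:V) 1, ∫⁻ t in Set.Ioi (0:ℝ),
      ENNReal.ofReal (t ^ (n-1)) * g (t • (ξ:V)) ∂volume
      ∂(volume : Measure V).toSphere := by
  haveI : Nontrivial V := by
    have : 0 < Module.finrank ℝ V := by rw [finrank_euclideanSpace_fin]; exact hn
    exact Module.nontrivial_of_finrank_pos this
  have h0 : MeasurableSet ({0}ᶜ : Set V) := (measurableSet_singleton 0).compl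
  have hmp := (volume : Measure V).measurePreserving_homeomorphUnitSphereProd
  rw [finrank_euclideanSpace_fin] at hmp
  have hcont : Measurable fun p : Metric.sphere (0:V) 1 × Set.Ioi (0:ℝ) =>
      g ((p.2 : ℝ) • (p.1 : V)) := by
    apply hg.comp
    exact ((continuous_subtype_val.comp continuous_snd).smul
      (continuous_subtype_val.comp continuous_fst)).measurable
  calc ∫⁻ y, g y ∂(volume : Measure V)
      = ∫⁻ y in ({0}ᶜ : Set V), g y ∂volume := by
        rw [restrict_compl_singleton]
    _ = ∫⁻ y : ({0}ᶜ : Set V), g y ∂((volume : Measure V).comap Subtype.val) :=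
        (lintegral_subtype_comap h0 g).symm
    _ = ∫⁻ p : Metric.sphere (0:V) 1 × Set.Ioi (0:ℝ), g ((p.2 : ℝ) • (p.1 : V))
        ∂(((volume : Measure V).toSphere).prod (Measure.volumeIoiPow (n-1))) := by
        rw [← hmp.lintegral_comp hcont]
        refine lintegral_congr fun x => ?_
        congr 1
        simp only [homeomorphUnitSphereProd_apply_fst_coe, homeomorphUnitSphereProd_apply_snd_coe]
        rw [smul_inv_smul₀ (norm_ne_zero_iff.2 x.2)]
    _ = ∫⁻ ξ : Metric.sphere (0:V) 1, ∫⁻ t in Set.Ioi (0:ℝ),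
        ENNReal.ofReal (t ^ (n-1)) * g (t • (ξ:V)) ∂volume ∂(volume : Measure V).toSphere := by
        rw [lintegral_prod _ hcont.aemeasurable]
        refine lintegral_congr fun ξ => ?_
        have hgξ : Measurable fun r : Set.Ioi (0:ℝ) => g ((r:ℝ) • (ξ:V)) :=
          hg.comp (continuous_subtype_val.smul continuous_const).measurable
        have hw : Measurable fun r : Set.Ioi (0:ℝ) => ENNReal.ofReal ((r:ℝ) ^ (n-1)) :=
          (measurable_subtype_coe.pow_const _).ennreal_ofReal
        calc ∫⁻ y : Set.Ioi (0:ℝ), g ((y:ℝ) • (ξ:V)) ∂(Measure.volumeIoiPow (n-1))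
            = ∫⁻ y : Set.Ioi (0:ℝ),
              ENNReal.ofReal ((y:ℝ) ^ (n-1)) * g ((y:ℝ) • (ξ:V))
              ∂((volume : Measure ℝ).comap Subtype.val) := by
              rw [Measure.volumeIoiPow, lintegral_withDensity_eq_lintegral_mul _ hw hgξ]
              rfl
          _ = ∫⁻ t in Set.Ioi (0:ℝ), ENNReal.ofReal (t ^ (n-1)) * g (t • (ξ:V)) ∂volume :=
              lintegral_subtype_comap measurableSet_Ioi
                (fun t : ℝ => ENNReal.ofReal (t ^ (n-1)) * g (t • (ξ:V)))

lemma indicator_one_le_one (A : Set V) (x : V) : A.indicator (1 : V → ℝ≥0∞) x ≤ 1 := by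
  by_cases hx : x ∈ A <;> simp [hx]

lemma lint_ind_mul {A : Set V} (hA : MeasurableSet A) (h : V → ℝ≥0∞) :
    ∫⁻ x, A.indicator 1 x * h x ∂volume = ∫⁻ x in A, h x ∂volume := by
  rw [← lintegral_indicator hA]
  refine lintegral_congr fun x => ?_
  by_cases hx : x ∈ A <;> simp [hx]

lemma measurable_phi : Measurable fun q : (Metric.sphere (0:V) 1 × V) × ℝ =>
    q.1.2 + q.2 • (q.1.1 : V) :=
  ((continuous_snd.comp continuous_fst).add (continuous_snd.smul
    (continuous_subtype_val.comp (continuous_fst.comp continuous_fst)))).measurable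

lemma measurable_inner_int {B : Set V} (hB : MeasurableSet B) :
    Measurable fun p : Metric.sphere (0:V) 1 × V =>
      ∫⁻ t in Set.Ioi (0:ℝ), ENNReal.ofReal (t ^ (n-1)) * B.indicator 1 (p.2 + t • (p.1:V)) := by
  apply Measurable.lintegral_prod_right' (f := fun q : (Metric.sphere (0:V) 1 × V) × ℝ =>
    ENNReal.ofReal (q.2 ^ (n-1)) * B.indicator 1 (q.1.2 + q.2 • (q.1.1 : V)))
  exact ((measurable_snd.pow_const _).ennreal_ofReal).mul
    ((measurable_one.indicator hB).comp measurable_phi)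

lemma measurable_chord {E : Set V} (hE : MeasurableSet E) :
    Measurable fun p : Metric.sphere (0:V) 1 × V =>
      volume {t : ℝ | p.2 + t • (p.1:V) ∈ E} :=
  measurable_measure_prodMk_left (measurable_phi hE)

lemma sliceJ (hn : 0 < n) {A B : Set V} (hA : MeasurableSet A) (hB : MeasurableSet B) :
    ∫⁻ p : Metric.sphere (0:V) 1 × V, A.indicator 1 p.2 *
      (∫⁻ t in Set.Ioi (0:ℝ), ENNReal.ofReal (t ^ (n-1)) * B.indicator 1 (p.2 + t • (p.1:V)))
      ∂(((volume : Measure V).toSphere).prod volume) = volume A * volume B := by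
  have hmeas : Measurable fun p : Metric.sphere (0:V) 1 × V => A.indicator 1 p.2 *
      (∫⁻ t in Set.Ioi (0:ℝ), ENNReal.ofReal (t ^ (n-1)) * B.indicator 1 (p.2 + t • (p.1:V))) :=
    ((measurable_one.indicator hA).comp measurable_snd).mul (measurable_inner_int hB)
  rw [lintegral_prod_symm _ hmeas.aemeasurable]
  have hx : ∀ x : V, (∫⁻ ξ : Metric.sphere (0:V) 1, A.indicator 1 x *
      (∫⁻ t in Set.Ioi (0:ℝ), ENNReal.ofReal (t ^ (n-1)) * B.indicator 1 (x + t • (ξ:V)))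
      ∂(volume : Measure V).toSphere) = A.indicator 1 x * volume B := by
    intro x
    rw [lintegral_const_mul' _ _ (lt_of_le_of_lt (indicator_one_le_one A x) ENNReal.one_lt_top).ne]
    congr 1
    have hg : Measurable fun y : V => B.indicator (1 : V → ℝ≥0∞) (x + y) :=
      (measurable_one.indicator hB).comp (measurable_id.const_add x)
    rw [← polar_lintegral hn _ hg, lintegral_add_left_eq_self (B.indicator 1) x,
      lintegral_indicator_one hB]
  calc ∫⁻ x, (∫⁻ ξ : Metric.sphere (0:V) 1, A.indicator 1 x *
        (∫⁻ t in Set.Ioi (0:ℝ), ENNReal.ofReal (t ^ (n-1)) * B.indicator 1 (x + t • (ξ:V)))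
        ∂(volume : Measure V).toSphere) ∂volume
      = ∫⁻ x, A.indicator 1 x * volume B ∂volume := lintegral_congr hx
    _ = (∫⁻ x, A.indicator 1 x ∂volume) * volume B :=
        lintegral_mul_const _ ((measurable_one.indicator hA))
    _ = volume A * volume B := by rw [lintegral_indicator_one hA]

lemma key (hn : 2 ≤ n) {E F : Set V} (hE : MeasurableSet E) (hF : MeasurableSet F)
    (hFc : Convex ℝ F) :
    volume (E ∩ F) ^ 2 ≤
      ((n : ℝ≥0∞) * volume F ^ 2) ^ (((n:ℝ)-1)/(n:ℝ)) * (Jn n E) ^ (1/(n:ℝ)) := by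
  have hn0 : 0 < n := by omega
  have hnR : (0:ℝ) < n := by exact_mod_cast hn0
  have hn1R : (0:ℝ) < (n:ℝ) - 1 := by
    have h1 : (1:ℝ) < n := by exact_mod_cast hn
    linarith
  set r1 : ℝ := ((n:ℝ)-1)/(n:ℝ) with hr1def
  have hr1 : 0 ≤ r1 := div_nonneg hn1R.le hnR.le
  set pe : ℝ := (n:ℝ)/((n:ℝ)-1) with hpedef
  have hpq : Real.HolderConjugate pe (n:ℝ) := by
    rw [Real.holderConjugate_iff]
    constructor
    · rw [hpedef, lt_div_iff₀ hn1R]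
      linarith
    · rw [hpedef]
      field_simp
      ring
  have hEF : MeasurableSet (E ∩ F) := hE.inter hF
  set μpr := (((volume : Measure V).toSphere).prod (volume : Measure V)) with hμpr
  set m : Metric.sphere (0:V) 1 × V → ℝ≥0∞ :=
    fun p => volume {t : ℝ | p.2 + t • (p.1:V) ∈ E} with hmdef
  set I : Metric.sphere (0:V) 1 × V → ℝ≥0∞ :=
    fun p => ∫⁻ t in Set.Ioi (0:ℝ),
      ENNReal.ofReal (t ^ (n-1)) * (E ∩ F).indicator 1 (p.2 + t • (p.1:V)) with hIdef
  set P : Metric.sphere (0:V) 1 × V → ℝ≥0∞ :=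
    fun p => ∫⁻ t in Set.Ioi (0:ℝ),
      ENNReal.ofReal (t ^ (n-1)) * F.indicator 1 (p.2 + t • (p.1:V)) with hPdef
  have hm : Measurable m := measurable_chord hE
  have hI : Measurable I := measurable_inner_int hEF
  have hP : Measurable P := measurable_inner_int hF
  set f : Metric.sphere (0:V) 1 × V → ℝ≥0∞ :=
    fun p => (E ∩ F).indicator 1 p.2 * ((n : ℝ≥0∞) * P p) ^ r1 with hfdef
  set g : Metric.sphere (0:V) 1 × V → ℝ≥0∞ :=
    fun p => (E ∩ F).indicator 1 p.2 * m p with hgdef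
  have hfm : Measurable f := ((measurable_one.indicator hEF).comp measurable_snd).mul
    ((measurable_const.mul hP).pow_const _)
  have hgm : Measurable g := ((measurable_one.indicator hEF).comp measurable_snd).mul hm
  -- Step A
  have stepA : volume (E ∩ F) ^ 2 = ∫⁻ p, (E ∩ F).indicator 1 p.2 * I p ∂μpr := by
    rw [sliceJ hn0 hEF hEF, sq]
  -- Step B : pointwise bound
  have hcore : ∀ ξ : Metric.sphere (0:V) 1, ∀ x : V, x ∈ E ∩ F →
      I (ξ, x) ≤ ((n : ℝ≥0∞) * P (ξ, x)) ^ r1 * m (ξ, x) := by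
    intro ξ x hx
    have hSm : MeasurableSet {t : ℝ | x + t • (ξ:V) ∈ E ∩ F} :=
      (measurable_const.add (measurable_id.smul measurable_const)) hEF
    have hIeq : I (ξ, x) = ∫⁻ t in {t : ℝ | x + t • (ξ:V) ∈ E ∩ F} ∩ Set.Ioi (0:ℝ),
        ENNReal.ofReal (t ^ (n-1)) ∂volume := by
      rw [← Measure.restrict_restrict hSm, ← lintegral_indicator hSm, hIdef]
      refine lintegral_congr fun t => ?_
      by_cases ht : x + t • (ξ:V) ∈ E ∩ F
      · rw [Set.indicator_of_mem ht, Set.indicator_of_mem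
          (show t ∈ {t : ℝ | x + t • (ξ:V) ∈ E ∩ F} from ht), Pi.one_apply, mul_one]
      · rw [Set.indicator_of_notMem ht, Set.indicator_of_notMem
          (show t ∉ {t : ℝ | x + t • (ξ:V) ∈ E ∩ F} from ht), mul_zero]
    have hbound : ∀ t ∈ {t : ℝ | x + t • (ξ:V) ∈ E ∩ F} ∩ Set.Ioi (0:ℝ),
        ENNReal.ofReal (t ^ (n-1)) ≤ ((n : ℝ≥0∞) * P (ξ, x)) ^ r1 := by
      rintro t ⟨htS, ht0⟩
      have ht0 : (0:ℝ) < t := ht0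
      have hsub : Set.Ioc (0:ℝ) t ⊆ {s : ℝ | x + s • (ξ:V) ∈ F} := by
        rintro s ⟨hs0, hst⟩
        have hθ0 : 0 ≤ s / t := le_of_lt (div_pos hs0 ht0)
        have hθ1 : 0 ≤ 1 - s / t := by
          have := (div_le_one ht0).2 hst
          linarith
        have hmem := hFc hx.2 (htS : x + t • (ξ:V) ∈ E ∩ F).2 hθ1 hθ0 (by ring)
        have heq : (1 - s / t) • x + (s / t) • (x + t • (ξ:V)) = x + s • (ξ:V) := by
          rw [smul_add, smul_smul, div_mul_cancel₀ s ht0.ne', sub_smul, one_smul]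
          abel
        rw [heq] at hmem
        exact hmem
      have hPge : ENNReal.ofReal (t ^ n / n) ≤ P (ξ, x) := by
        have h1 : ∫⁻ s in Set.Ioc (0:ℝ) t, ENNReal.ofReal (s ^ (n-1)) ∂volume ≤ P (ξ, x) := by
          calc ∫⁻ s in Set.Ioc (0:ℝ) t, ENNReal.ofReal (s ^ (n-1)) ∂volume
              = ∫⁻ s in Set.Ioc (0:ℝ) t,
                ENNReal.ofReal (s ^ (n-1)) * F.indicator 1 (x + s • (ξ:V)) ∂volume := by
                refine (setLIntegral_congr_fun measurableSet_Ioc ?_).symm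
                exact fun s hs => by
                  rw [Set.indicator_of_mem (show x + s • (ξ:V) ∈ F from hsub hs), Pi.one_apply, mul_one]
            _ ≤ ∫⁻ s in Set.Ioi (0:ℝ),
                ENNReal.ofReal (s ^ (n-1)) * F.indicator 1 (x + s • (ξ:V)) ∂volume :=
                lintegral_mono_set Set.Ioc_subset_Ioi_self
            _ = P (ξ, x) := by simp only [hPdef]
        calc ENNReal.ofReal (t ^ n / n)
            = ∫⁻ s in Set.Ioc (0:ℝ) t, ENNReal.ofReal (s ^ (n-1)) ∂volume := by
              rw [lint_pow_Ioc _ ht0.le, Nat.sub_add_cancel (by omega : 1 ≤ n),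
                show ((n-1 : ℕ):ℝ) + 1 = (n:ℝ) by
                  rw [Nat.cast_sub (by omega : 1 ≤ n)]; ring]
          _ ≤ P (ξ, x) := h1
      have hofn : ENNReal.ofReal (t ^ n) ≤ (n : ℝ≥0∞) * P (ξ, x) := by
        calc ENNReal.ofReal (t ^ n) = (n : ℝ≥0∞) * ENNReal.ofReal (t ^ n / n) := by
              rw [← ENNReal.ofReal_natCast n, ← ENNReal.ofReal_mul (Nat.cast_nonneg n),
                mul_div_cancel₀ _ (by exact_mod_cast hn0.ne' : (n:ℝ) ≠ 0)]
          _ ≤ (n : ℝ≥0∞) * P (ξ, x) := mul_le_mul_right hPge _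
      have hnr1 : (n:ℝ) * r1 = ((n - 1 : ℕ) : ℝ) := by
        rw [hr1def, Nat.cast_sub (by omega : 1 ≤ n), Nat.cast_one]
        field_simp
      calc ENNReal.ofReal (t ^ (n-1)) = (ENNReal.ofReal (t ^ n)) ^ r1 := by
            rw [ENNReal.ofReal_rpow_of_pos (pow_pos ht0 n)]
            congr 1
            rw [← Real.rpow_natCast t n, ← Real.rpow_mul ht0.le, hnr1, Real.rpow_natCast]
        _ ≤ ((n : ℝ≥0∞) * P (ξ, x)) ^ r1 := ENNReal.rpow_le_rpow hofn hr1
    calc I (ξ, x) = ∫⁻ t in {t : ℝ | x + t • (ξ:V) ∈ E ∩ F} ∩ Set.Ioi (0:ℝ),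
          ENNReal.ofReal (t ^ (n-1)) ∂volume := hIeq
      _ ≤ ∫⁻ _ in {t : ℝ | x + t • (ξ:V) ∈ E ∩ F} ∩ Set.Ioi (0:ℝ),
          ((n : ℝ≥0∞) * P (ξ, x)) ^ r1 ∂volume := setLIntegral_mono measurable_const hbound
      _ = ((n : ℝ≥0∞) * P (ξ, x)) ^ r1 *
          volume ({t : ℝ | x + t • (ξ:V) ∈ E ∩ F} ∩ Set.Ioi (0:ℝ)) := setLIntegral_const _ _
      _ ≤ ((n : ℝ≥0∞) * P (ξ, x)) ^ r1 * m (ξ, x) := by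
          refine mul_le_mul_right (measure_mono fun t ht => ?_) _
          exact (ht.1 : x + t • (ξ:V) ∈ E ∩ F).1
  have stepB : ∀ p, (E ∩ F).indicator 1 p.2 * I p ≤ f p * g p := by
    rintro ⟨ξ, x⟩
    by_cases hx : x ∈ E ∩ F
    · simpa [hfdef, hgdef, Set.indicator_of_mem hx] using hcore ξ x hx
    · simp [hfdef, hgdef, Set.indicator_of_notMem hx]
  -- Step C : Hölder
  have stepC : ∫⁻ p, f p * g p ∂μpr ≤
      (∫⁻ p, f p ^ pe ∂μpr) ^ (1/pe) * (∫⁻ p, g p ^ (n:ℝ) ∂μpr) ^ (1/(n:ℝ)) := by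
    simpa [Pi.mul_apply] using
      ENNReal.lintegral_mul_le_Lp_mul_Lq μpr hpq hfm.aemeasurable hgm.aemeasurable
  -- Step D : the f-factor
  have hintf : ∫⁻ p, f p ^ pe ∂μpr ≤ (n : ℝ≥0∞) * volume F ^ 2 := by
    have hfpe : ∀ p, f p ^ pe = (E ∩ F).indicator 1 p.2 * ((n : ℝ≥0∞) * P p) := by
      intro p
      rw [hfdef]
      simp only
      rw [ENNReal.mul_rpow_of_nonneg _ _ hpq.nonneg]
      congr 1
      · by_cases hp : p.2 ∈ E ∩ F <;>
          simp [hp, ENNReal.one_rpow, ENNReal.zero_rpow_of_pos hpq.pos]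
      · rw [← ENNReal.rpow_mul]
        have : r1 * pe = 1 := by
          rw [hr1def, hpedef]
          field_simp
        rw [this, ENNReal.rpow_one]
    calc ∫⁻ p, f p ^ pe ∂μpr
        = ∫⁻ p, (E ∩ F).indicator 1 p.2 * ((n : ℝ≥0∞) * P p) ∂μpr := lintegral_congr hfpe
      _ ≤ ∫⁻ p, F.indicator 1 p.2 * ((n : ℝ≥0∞) * P p) ∂μpr := by
          refine lintegral_mono fun p => mul_le_mul_left ?_ _
          exact Set.indicator_le_indicator_of_subset Set.inter_subset_right
            (fun _ => zero_le) _
      _ = (n : ℝ≥0∞) * ∫⁻ p, F.indicator 1 p.2 * P p ∂μpr := by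
          have hFP : Measurable fun p : Metric.sphere (0:V) 1 × V => F.indicator 1 p.2 * P p := by
            exact ((measurable_one.indicator hF).comp measurable_snd).mul hP
          rw [← lintegral_const_mul _ hFP]
          refine lintegral_congr fun p => by ring
      _ = (n : ℝ≥0∞) * (volume F * volume F) := by rw [sliceJ hn0 hF hF]
      _ = (n : ℝ≥0∞) * volume F ^ 2 := by rw [sq]
  -- Step E : the g-factor
  have hintg : ∫⁻ p, g p ^ (n:ℝ) ∂μpr ≤ Jn n E := by
    have hgn : ∀ p, g p ^ (n:ℝ) = (E ∩ F).indicator 1 p.2 * m p ^ n := by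
      intro p
      rw [hgdef]
      simp only
      rw [ENNReal.mul_rpow_of_nonneg _ _ (Nat.cast_nonneg n)]
      congr 1
      · by_cases hp : p.2 ∈ E ∩ F
        · simp [hp]
        · simp [hp, ENNReal.zero_rpow_of_pos hnR]
      · exact ENNReal.rpow_natCast _ n
    calc ∫⁻ p, g p ^ (n:ℝ) ∂μpr
        = ∫⁻ p, (E ∩ F).indicator 1 p.2 * m p ^ n ∂μpr := lintegral_congr hgn
      _ ≤ ∫⁻ p, E.indicator 1 p.2 * m p ^ n ∂μpr := by
          refine lintegral_mono fun p => mul_le_mul_left ?_ _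
          exact Set.indicator_le_indicator_of_subset Set.inter_subset_left
            (fun _ => zero_le) _
      _ = Jn n E := by
          have hEmn : Measurable fun p : Metric.sphere (0:V) 1 × V =>
              E.indicator 1 p.2 * m p ^ n := by
            exact ((measurable_one.indicator hE).comp measurable_snd).mul (hm.pow_const n)
          rw [hμpr, lintegral_prod _ hEmn.aemeasurable]
          unfold Jn
          refine lintegral_congr fun ξ => ?_
          exact lint_ind_mul hE fun x => (m (ξ, x)) ^ n
  -- assemble
  have hpe1 : (1/pe) = r1 := by rw [hpedef, hr1def, one_div_div]
  calc volume (E ∩ F) ^ 2 = ∫⁻ p, (E ∩ F).indicator 1 p.2 * I p ∂μpr := stepA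
    _ ≤ ∫⁻ p, f p * g p ∂μpr := lintegral_mono stepB
    _ ≤ (∫⁻ p, f p ^ pe ∂μpr) ^ (1/pe) * (∫⁻ p, g p ^ (n:ℝ) ∂μpr) ^ (1/(n:ℝ)) := stepC
    _ ≤ ((n : ℝ≥0∞) * volume F ^ 2) ^ (1/pe) * (Jn n E) ^ (1/(n:ℝ)) := by
        exact mul_le_mul' (ENNReal.rpow_le_rpow hintf (by rw [hpe1]; exact hr1))
          (ENNReal.rpow_le_rpow hintg (by positivity))
    _ = ((n : ℝ≥0∞) * volume F ^ 2) ^ r1 * (Jn n E) ^ (1/(n:ℝ)) := by rw [hpe1]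

/-- near-convexity implies the convexity index is bounded below. -/
theorem statement14 (n : ℕ) (hn : 2 ≤ n) (c : ℝ) (hc : c ∈ Set.Ioo (0 : ℝ) 1) :
    ∃ c' : ℝ, 0 < c' ∧
      ∀ E : Set (EuclideanSpace ℝ (Fin n)), MeasurableSet E →
        0 < volume E → volume E < ⊤ →
        (∃ F : Set (EuclideanSpace ℝ (Fin n)), Convex ℝ F ∧
          ENNReal.ofReal c * volume F ≤ volume E ∧
          volume E ≤ ENNReal.ofReal c⁻¹ * volume (E ∩ F)) →
        ENNReal.ofReal c' * (volume E) ^ 2 ≤ Jn n E := by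
  obtain ⟨hc0, hc1⟩ := hc
  have hn0 : 0 < n := by omega
  have hnR : (0:ℝ) < n := by exact_mod_cast hn0
  refine ⟨c ^ (4*n-2) / (n:ℝ) ^ (n-1), div_pos (pow_pos hc0 _) (pow_pos hnR _), ?_⟩
  rintro E hE hE0 hEtop ⟨F, hFc, hFE1, hFE2⟩
  set F' := interior F with hF'def
  have hF'm : MeasurableSet F' := isOpen_interior.measurableSet
  have hF'c : Convex ℝ F' := hFc.interior
  have hfront : volume (frontier F) = 0 := hFc.addHaar_frontier volume
  have hFsub : F ⊆ F' ∪ frontier F := by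
    intro x hx
    have h2 := subset_closure hx
    rw [closure_eq_interior_union_frontier] at h2
    exact h2
  have hF'vol : volume F' = volume F := by
    refine le_antisymm (measure_mono interior_subset) ?_
    calc volume F ≤ volume (F' ∪ frontier F) := measure_mono hFsub
      _ ≤ volume F' + volume (frontier F) := measure_union_le _ _
      _ = volume F' := by rw [hfront, add_zero]
  have hEF'vol : volume (E ∩ F') = volume (E ∩ F) := by
    refine le_antisymm (measure_mono (Set.inter_subset_inter_right E interior_subset)) ?_
    calc volume (E ∩ F) ≤ volume ((E ∩ F') ∪ frontier F) :=
        measure_mono (fun x hx => by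
          rcases hFsub hx.2 with h | h
          · exact Or.inl ⟨hx.1, h⟩
          · exact Or.inr h)
      _ ≤ volume (E ∩ F') + volume (frontier F) := measure_union_le _ _
      _ = volume (E ∩ F') := by rw [hfront, add_zero]
  have hkey := key hn hE hF'm hF'c
  rw [hEF'vol, hF'vol] at hkey
  set a := volume (E ∩ F) with hadef
  set b := volume F with hbdef
  set Vv := volume E with hVvdef
  set J := Jn n E with hJdef
  set oc := ENNReal.ofReal c with hocdef
  set oc' := ENNReal.ofReal c⁻¹ with hoc'def
  have hA : oc * Vv ≤ a := by
    calc oc * Vv ≤ oc * (oc' * a) := mul_le_mul_right hFE2 _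
      _ = (oc * oc') * a := (mul_assoc _ _ _).symm
      _ = a := by
          rw [hocdef, hoc'def, ← ENNReal.ofReal_mul hc0.le, mul_inv_cancel₀ hc0.ne',
            ENNReal.ofReal_one, one_mul]
  have hB : b ≤ oc' * Vv := by
    calc b = (oc' * oc) * b := by
          rw [hoc'def, hocdef, ← ENNReal.ofReal_mul (inv_nonneg.2 hc0.le),
            inv_mul_cancel₀ hc0.ne', ENNReal.ofReal_one, one_mul]
      _ = oc' * (oc * b) := mul_assoc _ _ _
      _ ≤ oc' * Vv := mul_le_mul_right hFE1 _
  -- raise hkey to the n-th power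
  have hstar : a ^ (2*n) ≤ ((n:ℝ≥0∞) * b^2) ^ (n-1) * J := by
    have h := ENNReal.rpow_le_rpow hkey (Nat.cast_nonneg n : (0:ℝ) ≤ (n:ℝ))
    rw [ENNReal.rpow_natCast (a^2) n, ← pow_mul, mul_comm 2 n,
      ENNReal.mul_rpow_of_nonneg _ _ (Nat.cast_nonneg n : (0:ℝ) ≤ (n:ℝ)),
      ← ENNReal.rpow_mul, ← ENNReal.rpow_mul,
      show (((n:ℝ)-1)/(n:ℝ)) * (n:ℝ) = ((n-1:ℕ):ℝ) from by
        rw [Nat.cast_sub (by omega : 1 ≤ n), Nat.cast_one]; field_simp,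
      show (1/(n:ℝ)) * (n:ℝ) = 1 from by field_simp,
      ENNReal.rpow_natCast, ENNReal.rpow_one] at h
    rwa [mul_comm n 2] at h
  have hchain : ENNReal.ofReal (c^(2*n)) * Vv^(2*n) ≤ ((n:ℝ≥0∞) * (oc' * Vv)^2)^(n-1) * J := by
    calc ENNReal.ofReal (c^(2*n)) * Vv^(2*n) = (oc * Vv)^(2*n) := by
          rw [mul_pow, hocdef, ← ENNReal.ofReal_pow hc0.le]
      _ ≤ a^(2*n) := pow_le_pow_left' hA _
      _ ≤ ((n:ℝ≥0∞) * b^2)^(n-1) * J := hstar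
      _ ≤ ((n:ℝ≥0∞) * (oc' * Vv)^2)^(n-1) * J :=
          mul_le_mul_left (pow_le_pow_left'
            (mul_le_mul_right (pow_le_pow_left' hB 2) _) _) _
  set D := ((n:ℝ≥0∞)^(n-1) * oc'^(2*(n-1))) * Vv^(2*(n-1)) with hDdef
  have hexp : ((n:ℝ≥0∞) * (oc' * Vv)^2)^(n-1) * J = J * D := by
    rw [hDdef]; ring
  have hD0 : D ≠ 0 := by
    rw [hDdef]
    refine mul_ne_zero (mul_ne_zero ?_ ?_) ?_
    · exact pow_ne_zero _ (by exact_mod_cast hn0.ne')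
    · exact pow_ne_zero _ (ne_of_gt (ENNReal.ofReal_pos.2 (inv_pos.2 hc0)))
    · exact pow_ne_zero _ hE0.ne'
  have hDtop : D ≠ ⊤ := by
    rw [hDdef]
    refine ENNReal.mul_ne_top (ENNReal.mul_ne_top ?_ ?_) ?_
    · exact ENNReal.pow_ne_top (ENNReal.natCast_ne_top n)
    · exact ENNReal.pow_ne_top ENNReal.ofReal_ne_top
    · exact ENNReal.pow_ne_top hEtop.ne
  rw [← ENNReal.mul_le_mul_iff_left hD0 hDtop]
  calc (ENNReal.ofReal (c^(4*n-2) / (n:ℝ)^(n-1)) * Vv^2) * D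
      = (ENNReal.ofReal (c^(4*n-2) / (n:ℝ)^(n-1)) * (n:ℝ≥0∞)^(n-1) * oc'^(2*(n-1)))
        * Vv^(2*n) := by
        rw [hDdef, show 2*n = 2 + 2*(n-1) from by omega, pow_add]; ring
    _ = ENNReal.ofReal (c^(2*n)) * Vv^(2*n) := by
        congr 1
        rw [show ((n:ℝ≥0∞)) = ENNReal.ofReal (n:ℝ) from (ENNReal.ofReal_natCast n).symm,
          hoc'def, ← ENNReal.ofReal_pow (Nat.cast_nonneg n),
          ← ENNReal.ofReal_pow (inv_nonneg.2 hc0.le),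
          ← ENNReal.ofReal_mul (by positivity), ← ENNReal.ofReal_mul (by positivity)]
        congr 1
        rw [div_mul_cancel₀ _ (by positivity : ((n:ℝ))^(n-1) ≠ 0), inv_pow,
          ← pow_sub₀ c hc0.ne' (by omega : 2*(n-1) ≤ 4*n-2)]
        congr 1
        omega
    _ ≤ ((n:ℝ≥0∞) * (oc' * Vv)^2)^(n-1) * J := hchain
    _ = J * D := hexp
end
end

section
/- Let n ≥ 2 be an integer and let A ⊆ ℝ be a Lebesgue-measurable set with λ¹(A) < ∞. Then ∫_A ∫_A |t₁ − t₂|^{n−1} dt₁ dt₂ ≥ (2 / (n(n+1))) · λ¹(A)^{n+1}. -/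
open MeasureTheory Filter
open scoped ENNReal

namespace S19
noncomputable def F (A : Set ℝ) (t : ℝ) : ℝ := (volume (A ∩ Set.Iic t)).toReal
variable {A : Set ℝ}



lemma vol_inter_ne_top (hfin : volume A < ⊤) (t : ℝ) : volume (A ∩ Set.Iic t) ≠ ⊤ :=
  ne_of_lt (lt_of_le_of_lt (measure_mono Set.inter_subset_left) hfin)

lemma F_nonneg (t : ℝ) : 0 ≤ F A t := ENNReal.toReal_nonneg

lemma F_le (hfin : volume A < ⊤) (t : ℝ) : F A t ≤ (volume A).toReal :=
  ENNReal.toReal_mono hfin.ne (measure_mono Set.inter_subset_left)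

lemma F_mono (hfin : volume A < ⊤) : Monotone (F A) := fun s t hst =>
  ENNReal.toReal_mono (vol_inter_ne_top hfin t)
    (measure_mono (Set.inter_subset_inter_right _ (Set.Iic_subset_Iic.2 hst)))

lemma vol_add (hA : MeasurableSet A) {s t : ℝ} (hst : s ≤ t) :
    volume (A ∩ Set.Iic t) = volume (A ∩ Set.Iic s) + volume (A ∩ Set.Ioc s t) := by
  rw [← measure_union ((Set.Iic_disjoint_Ioc le_rfl).mono Set.inter_subset_right
    Set.inter_subset_right) (hA.inter measurableSet_Ioc)]
  congr 1
  rw [← Set.inter_union_distrib_left, Set.Iic_union_Ioc_eq_Iic hst]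

lemma F_lip (hA : MeasurableSet A) (hfin : volume A < ⊤) {s t : ℝ} (hst : s ≤ t) :
    F A t - F A s ≤ t - s := by
  have h := vol_add hA hst
  have h2 : F A t = F A s + (volume (A ∩ Set.Ioc s t)).toReal := by
    rw [F, h, ENNReal.toReal_add (vol_inter_ne_top hfin s)
      (ne_of_lt (lt_of_le_of_lt (measure_mono Set.inter_subset_left) hfin))]
    rfl
  have h3 : (volume (A ∩ Set.Ioc s t)).toReal ≤ t - s := by
    have := measure_mono (μ := volume) (Set.inter_subset_right (s := A) (t := Set.Ioc s t))
    rw [Real.volume_Ioc] at this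
    calc (volume (A ∩ Set.Ioc s t)).toReal ≤ (ENNReal.ofReal (t - s)).toReal :=
          ENNReal.toReal_mono ENNReal.ofReal_ne_top this
      _ = t - s := ENNReal.toReal_ofReal (by linarith)
  linarith

lemma F_abs (hA : MeasurableSet A) (hfin : volume A < ⊤) (s t : ℝ) :
    |F A s - F A t| ≤ |s - t| := by
  rcases le_total s t with h | h
  · rw [abs_sub_comm, abs_of_nonneg (sub_nonneg.2 (F_mono hfin h)), abs_sub_comm,
      abs_of_nonneg (sub_nonneg.2 h)]
    exact F_lip hA hfin h
  · rw [abs_of_nonneg (sub_nonneg.2 (F_mono hfin h)), abs_of_nonneg (sub_nonneg.2 h)]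
    exact F_lip hA hfin h

lemma F_cont (hA : MeasurableSet A) (hfin : volume A < ⊤) : Continuous (F A) :=
  (LipschitzWith.of_dist_le_mul (K := 1) fun s t => by
    simpa [Real.dist_eq] using F_abs hA hfin s t).continuous


-- placeholders for section 1 lemmas

lemma exists_F_lt (hA : MeasurableSet A) (hfin : volume A < ⊤) {x : ℝ} (hx : 0 < x) :
    ∃ t, F A t < x := by
  have hanti : Antitone fun k : ℕ => A ∩ Set.Iic (-(k : ℝ)) := fun i j hij =>
    Set.inter_subset_inter_right _ (Set.Iic_subset_Iic.2 (by exact_mod_cast neg_le_neg (by exact_mod_cast hij)))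
  have hint : ⋂ k : ℕ, A ∩ Set.Iic (-(k : ℝ)) = ∅ := by
    ext t
    simp only [Set.mem_iInter, Set.mem_inter_iff, Set.mem_Iic, Set.mem_empty_iff_false, iff_false]
    intro h
    obtain ⟨k, hk⟩ := exists_nat_gt (-t)
    have := (h k).2
    linarith
  have htend : Tendsto (fun k : ℕ => volume (A ∩ Set.Iic (-(k : ℝ)))) atTop (nhds 0) := by
    have := tendsto_measure_iInter_atTop (μ := volume) (s := fun k : ℕ => A ∩ Set.Iic (-(k : ℝ)))
      (fun k => ((hA.inter measurableSet_Iic).nullMeasurableSet)) hanti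
      ⟨0, vol_inter_ne_top hfin _⟩
    rwa [hint, measure_empty] at this
  have htend2 : Tendsto (fun k : ℕ => F A (-(k : ℝ))) atTop (nhds 0) := by
    have := (ENNReal.tendsto_toReal (by simp)).comp htend
    exact this
  obtain ⟨k, hk⟩ := (htend2.eventually (eventually_lt_nhds hx)).exists
  exact ⟨_, hk⟩

lemma exists_lt_F (hA : MeasurableSet A) (hfin : volume A < ⊤) {x : ℝ}
    (hx : x < (volume A).toReal) : ∃ t, x < F A t := by
  have hmono : Monotone fun k : ℕ => A ∩ Set.Iic (k : ℝ) := fun i j hij =>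
    Set.inter_subset_inter_right _ (Set.Iic_subset_Iic.2 (by exact_mod_cast hij))
  have hun : ⋃ k : ℕ, A ∩ Set.Iic (k : ℝ) = A := by
    ext t
    simp only [Set.mem_iUnion, Set.mem_inter_iff, Set.mem_Iic]
    constructor
    · rintro ⟨k, hk, _⟩; exact hk
    · intro h; obtain ⟨k, hk⟩ := exists_nat_ge t; exact ⟨k, h, hk⟩
  have htend : Tendsto (fun k : ℕ => volume (A ∩ Set.Iic (k : ℝ))) atTop (nhds (volume A)) := by
    have := tendsto_measure_iUnion_atTop (μ := volume) hmono
    rwa [hun] at this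
  have htend2 : Tendsto (fun k : ℕ => F A (k : ℝ)) atTop (nhds (volume A).toReal) :=
    (ENNReal.tendsto_toReal hfin.ne).comp htend
  obtain ⟨k, hk⟩ := (htend2.eventually (eventually_gt_nhds hx)).exists
  exact ⟨_, hk⟩

lemma map_F (hA : MeasurableSet A) (hfin : volume A < ⊤) :
    (volume.restrict A).map (F A) = volume.restrict (Set.Ioc 0 (volume A).toReal) := by
  set m := (volume A).toReal with hm
  have hm0 : 0 ≤ m := ENNReal.toReal_nonneg
  have hFm : Measurable (F A) := (F_mono hfin).measurable
  haveI : IsFiniteMeasure (volume.restrict A) :=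
    ⟨by rwa [Measure.restrict_apply_univ]⟩
  haveI : IsFiniteMeasure ((volume.restrict A).map (F A)) := by
    constructor
    rw [Measure.map_apply hFm MeasurableSet.univ]
    exact measure_lt_top _ _
  refine Measure.ext_of_Iic _ _ fun x => ?_
  rw [Measure.map_apply hFm measurableSet_Iic, Measure.restrict_apply (hFm measurableSet_Iic),
    Measure.restrict_apply measurableSet_Iic]
  have hrhs : Set.Iic x ∩ Set.Ioc 0 m = Set.Ioc 0 (min x m) := by
    rw [Set.inter_comm, Set.Ioc_inter_Iic, min_comm]
  rw [hrhs, Real.volume_Ioc, sub_zero]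
  rcases lt_or_ge x 0 with hx | hx
  · have : F A ⁻¹' Set.Iic x = ∅ := by
      ext t; simp only [Set.mem_preimage, Set.mem_Iic, Set.mem_empty_iff_false, iff_false]
      intro h; exact absurd (le_trans (F_nonneg t) h) (not_le.2 hx)
    rw [this, Set.empty_inter, measure_empty, ENNReal.ofReal_eq_zero.2]
    exact le_of_lt (lt_of_le_of_lt (min_le_left _ _) hx)
  rcases le_or_gt m x with hxm | hxm
  · have : F A ⁻¹' Set.Iic x = Set.univ := by
      ext t; simp only [Set.mem_preimage, Set.mem_Iic, Set.mem_univ, iff_true]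
      exact le_trans (F_le hfin t) hxm
    rw [this, Set.univ_inter, min_eq_right hxm]
    exact (ENNReal.ofReal_toReal hfin.ne).symm
  · -- 0 ≤ x < m
    rw [min_eq_left hxm.le]
    set S := F A ⁻¹' Set.Iic x with hS
    have hSclosed : IsClosed S := IsClosed.preimage (F_cont hA hfin) isClosed_Iic
    obtain ⟨t₀, ht₀⟩ := exists_lt_F hA hfin hxm
    have hbdd : BddAbove S := by
      refine ⟨t₀, fun t ht => ?_⟩
      by_contra hc
      push_neg at hc
      exact absurd (le_trans (F_mono hfin hc.le) ht) (not_le.2 ht₀)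
    rcases S.eq_empty_or_nonempty with hSe | hSne
    · -- then x must be 0
      have hx0 : x = 0 := by
        rcases eq_or_lt_of_le hx with h | h
        · exact h.symm
        · obtain ⟨t, ht⟩ := exists_F_lt hA hfin h
          exact absurd (Set.eq_empty_iff_forall_notMem.1 hSe t) (by simp [hS, ht.le])
      rw [hSe, Set.empty_inter, measure_empty, hx0, ENNReal.ofReal_zero]
    · set s := sSup S with hs
      have hsmem : s ∈ S := hSclosed.csSup_mem hSne hbdd
      have hSeq : S = Set.Iic s := by
        ext t
        constructor
        · exact fun ht => le_csSup hbdd ht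
        · intro ht
          exact le_trans (F_mono hfin ht) hsmem
      have hFs : F A s = x := by
        refine le_antisymm hsmem ?_
        by_contra hc
        push_neg at hc
        have hopen : IsOpen (F A ⁻¹' Set.Iio x) := (F_cont hA hfin).isOpen_preimage _ isOpen_Iio
        obtain ⟨ε, hε, hball⟩ := Metric.isOpen_iff.1 hopen s hc
        have hmem : s + ε / 2 ∈ F A ⁻¹' Set.Iio x := hball (by
          rw [Metric.mem_ball, Real.dist_eq]
          rw [abs_of_nonneg (by linarith : (0:ℝ) ≤ s + ε / 2 - s)]
          linarith)
        have hlt : F A (s + ε / 2) < x := hmem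
        have hmemS : s + ε / 2 ∈ S := Set.mem_preimage.2 hlt.le
        have := le_csSup hbdd hmemS
        linarith
      rw [hSeq, Set.inter_comm]
      have : volume (A ∩ Set.Iic s) = ENNReal.ofReal (F A s) :=
        (ENNReal.ofReal_toReal (vol_inter_ne_top hfin s)).symm
      rw [this, hFs]


lemma change (hA : MeasurableSet A) (hfin : volume A < ⊤) (g : ℝ → ℝ → ℝ≥0∞)
    (hg : Measurable (Function.uncurry g)) :
    ∫⁻ t₁ in A, ∫⁻ t₂ in A, g (F A t₁) (F A t₂) =
      ∫⁻ u in Set.Ioc 0 (volume A).toReal, ∫⁻ v in Set.Ioc 0 (volume A).toReal, g u v := by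
  have hFm : Measurable (F A) := (F_mono hfin).measurable
  have hmap := map_F hA hfin
  have hinner : ∀ u, ∫⁻ t₂ in A, g u (F A t₂) =
      ∫⁻ v in Set.Ioc 0 (volume A).toReal, g u v := fun u => by
    rw [← hmap, lintegral_map (show Measurable fun v => g u v from hg.comp measurable_prodMk_left) hFm]
  have hG : Measurable fun u => ∫⁻ v in Set.Ioc 0 (volume A).toReal, g u v :=
    hg.lintegral_prod_right
  calc ∫⁻ t₁ in A, ∫⁻ t₂ in A, g (F A t₁) (F A t₂)
      = ∫⁻ t₁ in A, (fun u => ∫⁻ v in Set.Ioc 0 (volume A).toReal, g u v) (F A t₁) :=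
        lintegral_congr fun t₁ => hinner _
    _ = ∫⁻ u, (fun u => ∫⁻ v in Set.Ioc 0 (volume A).toReal, g u v) u
          ∂((volume.restrict A).map (F A)) := (lintegral_map hG hFm).symm
    _ = ∫⁻ u in Set.Ioc 0 (volume A).toReal, ∫⁻ v in Set.Ioc 0 (volume A).toReal, g u v := by
        rw [hmap]

lemma interval_calc (n : ℕ) (hn : 2 ≤ n) (m : ℝ) (hm : 0 ≤ m) :
    ∫⁻ u in Set.Ioc 0 m, ∫⁻ v in Set.Ioc 0 m, ENNReal.ofReal (|u - v| ^ (n - 1)) =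
      ENNReal.ofReal (2 / ((n : ℝ) * ((n : ℝ) + 1)) * m ^ (n + 1)) := by
  have hn1 : (n - 1) + 1 = n := by omega
  have hcast : ((n - 1 : ℕ) : ℝ) + 1 = (n : ℝ) := by
    have : ((n - 1 : ℕ) : ℝ) = (n : ℝ) - 1 := by
      rw [Nat.cast_sub (by omega)]; simp
    rw [this]; ring
  have hnR : (0 : ℝ) < (n : ℝ) := by positivity
  have hinner : ∀ u ∈ Set.Icc 0 m,
      ∫⁻ v in Set.Ioc 0 m, ENNReal.ofReal (|u - v| ^ (n - 1)) =
        ENNReal.ofReal ((u ^ n + (m - u) ^ n) / (n : ℝ)) := by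
    intro u hu
    have hcont : Continuous fun v : ℝ => |u - v| ^ (n - 1) :=
      ((continuous_const.sub continuous_id).abs).pow _
    have hint : IntegrableOn (fun v : ℝ => |u - v| ^ (n - 1)) (Set.Ioc 0 m) :=
      hcont.integrableOn_Ioc
    rw [← ofReal_integral_eq_lintegral_ofReal hint
      (Eventually.of_forall fun v => pow_nonneg (abs_nonneg _) _)]
    congr 1
    rw [← intervalIntegral.integral_of_le hm]
    have hii1 : IntervalIntegrable (fun v : ℝ => |u - v| ^ (n - 1)) volume 0 u :=
      hcont.intervalIntegrable _ _
    have hii2 : IntervalIntegrable (fun v : ℝ => |u - v| ^ (n - 1)) volume u m :=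
      hcont.intervalIntegrable _ _
    rw [← intervalIntegral.integral_add_adjacent_intervals hii1 hii2]
    have h1 : ∫ v in (0:ℝ)..u, |u - v| ^ (n - 1) = u ^ n / (n : ℝ) := by
      rw [intervalIntegral.integral_congr (g := fun v => (u - v) ^ (n - 1))
        (fun v hv => by
          rw [Set.uIcc_of_le hu.1] at hv
          rw [abs_of_nonneg (sub_nonneg.2 hv.2)])]
      rw [intervalIntegral.integral_comp_sub_left (fun x => x ^ (n - 1)) u]
      simp only [sub_self, sub_zero]
      rw [integral_pow, hn1, hcast]
      have : (0:ℝ) ^ n = 0 := zero_pow (by omega)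
      rw [this]; ring
    have h2 : ∫ v in u..m, |u - v| ^ (n - 1) = (m - u) ^ n / (n : ℝ) := by
      rw [intervalIntegral.integral_congr (g := fun v => (v - u) ^ (n - 1))
        (fun v hv => by
          rw [Set.uIcc_of_le hu.2] at hv
          rw [abs_sub_comm, abs_of_nonneg (sub_nonneg.2 hv.1)])]
      rw [intervalIntegral.integral_comp_sub_right (fun x => x ^ (n - 1)) u]
      simp only [sub_self]
      rw [integral_pow, hn1, hcast]
      have : (0:ℝ) ^ n = 0 := zero_pow (by omega)
      rw [this]; ring
    rw [h1, h2]; ring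
  rw [setLIntegral_congr_fun_ae measurableSet_Ioc
    (ae_of_all _ fun u hu => hinner u (Set.Ioc_subset_Icc_self hu))]
  have hcont2 : Continuous fun u : ℝ => (u ^ n + (m - u) ^ n) / (n : ℝ) := by
    apply Continuous.div_const
    exact (continuous_pow n).add (((continuous_const.sub continuous_id)).pow n)
  have hint2 : IntegrableOn (fun u : ℝ => (u ^ n + (m - u) ^ n) / (n : ℝ)) (Set.Ioc 0 m) :=
    hcont2.integrableOn_Ioc
  rw [← ofReal_integral_eq_lintegral_ofReal hint2 ((ae_restrict_iff' measurableSet_Ioc).2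
    (ae_of_all _ fun u hu => by
      have h1 : (0:ℝ) ≤ u := hu.1.le
      have h2 : u ≤ m := hu.2
      exact div_nonneg (add_nonneg (pow_nonneg h1 n) (pow_nonneg (by linarith) n))
        (Nat.cast_nonneg n)))]
  congr 1
  rw [← intervalIntegral.integral_of_le hm]
  have hiia : IntervalIntegrable (fun u : ℝ => u ^ n) volume 0 m :=
    (continuous_pow n).intervalIntegrable _ _
  have hiib : IntervalIntegrable (fun u : ℝ => (m - u) ^ n) volume 0 m :=
    ((continuous_const.sub continuous_id).pow n).intervalIntegrable _ _
  have : ∫ u in (0:ℝ)..m, (u ^ n + (m - u) ^ n) / (n : ℝ) =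
      ((∫ u in (0:ℝ)..m, u ^ n) + ∫ u in (0:ℝ)..m, (m - u) ^ n) / (n : ℝ) := by
    rw [intervalIntegral.integral_div, intervalIntegral.integral_add hiia hiib]
  rw [this]
  have ha : ∫ u in (0:ℝ)..m, u ^ n = m ^ (n + 1) / ((n : ℝ) + 1) := by
    rw [integral_pow]; simp
  have hb : ∫ u in (0:ℝ)..m, (m - u) ^ n = m ^ (n + 1) / ((n : ℝ) + 1) := by
    rw [intervalIntegral.integral_comp_sub_left (fun x => x ^ n) m]
    simp only [sub_self, sub_zero]
    rw [integral_pow]; simp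
  rw [ha, hb]
  congr 1
  have hne : (n : ℝ) ≠ 0 := by positivity
  have hne2 : (n : ℝ) + 1 ≠ 0 := by positivity
  field_simp
  ring

end S19

/-- lower bound for the Riesz-type double integral over a set of finite
one-dimensional measure. -/
theorem statement19 (n : ℕ) (hn : 2 ≤ n) (A : Set ℝ) (hA : MeasurableSet A)
    (hfin : volume A < ⊤) :
    ENNReal.ofReal (2 / ((n : ℝ) * ((n : ℝ) + 1)) * (volume A).toReal ^ (n + 1)) ≤
      ∫⁻ t₁ in A, ∫⁻ t₂ in A, ENNReal.ofReal (|t₁ - t₂| ^ (n - 1)) := by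
  have hgm : Measurable (Function.uncurry fun u v : ℝ => ENNReal.ofReal (|u - v| ^ (n - 1))) := by
    apply Continuous.measurable
    exact ENNReal.continuous_ofReal.comp (((continuous_fst.sub continuous_snd).abs).pow _)
  have hchg := S19.change hA hfin (fun u v : ℝ => ENNReal.ofReal (|u - v| ^ (n - 1))) hgm
  have hcalc := S19.interval_calc n hn (volume A).toReal ENNReal.toReal_nonneg
  calc ENNReal.ofReal (2 / ((n : ℝ) * ((n : ℝ) + 1)) * (volume A).toReal ^ (n + 1))
      = ∫⁻ t₁ in A, ∫⁻ t₂ in A, ENNReal.ofReal (|S19.F A t₁ - S19.F A t₂| ^ (n - 1)) :=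
        (hchg.trans hcalc).symm
    _ ≤ ∫⁻ t₁ in A, ∫⁻ t₂ in A, ENNReal.ofReal (|t₁ - t₂| ^ (n - 1)) :=
        lintegral_mono fun t₁ => lintegral_mono fun t₂ =>
          ENNReal.ofReal_le_ofReal
            (pow_le_pow_left₀ (abs_nonneg _) (S19.F_abs hA hfin _ _) _)
end
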